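/- Let q be an odd prime, and let J' be an r×r even integral symmetric matrix and M' a d×d integral symmetric matrix, both invertible modulo q. Then G_{J',M'}(q) = (det(J'/2) / q)^d · (det M' / q)^r · G_1(q)^{rd}, where (·/q) denotes the Legendre symbol and G_1(q) = Σ_{x mod q} exp(2πi x²/q) is the classical quadratic Gauss sum. (Here J' even integral means J' = 2J for some integral symmetric J with integer entries, and e{A} = exp(πi Tr A), so G_{J',M'}(q) = Σ_{x mod q} exp(2πi Tr(ᵗx J x M')/q).) -/

import Mathlib

open Matrix

/-- The generalized Gauss sum `G_{J,M}(NN) = Σ_{x mod NN} exp(πi·Tr(ᵗx J x M)/NN)`. -/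
noncomputable def GS (r d NN : ℕ) (J : Matrix (Fin r) (Fin r) ℤ)
    (M : Matrix (Fin d) (Fin d) ℤ) : ℂ :=
  ∑ x : Matrix (Fin r) (Fin d) (Fin NN),
    Complex.exp ((Real.pi : ℂ) * Complex.I *
      (((Matrix.trace ((x.map fun a => ((a : ℕ) : ℤ))ᵀ * J *
          (x.map fun a => ((a : ℕ) : ℤ)) * M) : ℤ) : ℂ) / (NN : ℂ)))

/-- The classical quadratic Gauss sum `G₁(q) = Σ_{x mod q} exp(2πi x²/q)`. -/
noncomputable def G1 (q : ℕ) : ℂ :=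
  ∑ x : Fin q, Complex.exp (2 * (Real.pi : ℂ) * Complex.I * ((x : ℕ) : ℂ) ^ 2 / (q : ℂ))

namespace GaussAux

/-- The equivalence between `Fin q` and `ZMod q`. -/
def finZModEquiv (q : ℕ) [NeZero q] : Fin q ≃ ZMod q where
  toFun a := ((a : ℕ) : ZMod q)
  invFun b := ⟨b.val, b.val_lt⟩
  left_inv a := by
    ext
    simp [ZMod.val_cast_of_lt a.isLt]
  right_inv b := by simp [ZMod.natCast_zmod_val]

lemma psi_ne_zero (q : ℕ) [Fact q.Prime] [NeZero q] :
    (ZMod.stdAddChar : AddChar (ZMod q) ℂ) ≠ 0 := by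
  haveI : Fact (1 < q) := ⟨(Fact.out : q.Prime).one_lt⟩
  intro h
  have h1 : ZMod.stdAddChar (1 : ZMod q) = ZMod.stdAddChar (0 : ZMod q) := by
    rw [h]; simp
  exact one_ne_zero (ZMod.injective_stdAddChar h1)

lemma addChar_map_sum {A R : Type*} [AddCommMonoid A] [CommMonoid R] (ψ : AddChar A R)
    {ι : Type*} (s : Finset ι) (f : ι → A) :
    ψ (∑ i ∈ s, f i) = ∏ i ∈ s, ψ (f i) := by
  classical
  induction s using Finset.cons_induction with
  | empty => simp
  | cons a s ha ih => rw [Finset.sum_cons, Finset.prod_cons, AddChar.map_add_eq_mul, ih]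

lemma sum_psi_mul_sq (q : ℕ) [Fact q.Prime] [NeZero q] (hq2 : q ≠ 2) (a : ZMod q) (ha : a ≠ 0) :
    ∑ x : ZMod q, ZMod.stdAddChar (a * x ^ 2)
      = (quadraticChar (ZMod q) a : ℂ) *
        ∑ y : ZMod q, (quadraticChar (ZMod q) y : ℂ) * ZMod.stdAddChar y := by
  have hchar : ringChar (ZMod q) ≠ 2 := by
    rw [ZMod.ringChar_zmod_n]; exact hq2
  have h1 : ∑ x : ZMod q, ZMod.stdAddChar (a * x ^ 2)
      = ∑ y : ZMod q, ((quadraticChar (ZMod q) y : ℂ) + 1) * ZMod.stdAddChar (a * y) := by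
    rw [← Finset.sum_fiberwise' Finset.univ (fun x : ZMod q => x ^ 2)
        (fun y => ZMod.stdAddChar (a * y))]
    refine Finset.sum_congr rfl fun y _ => ?_
    rw [Finset.sum_const, nsmul_eq_mul]
    congr 1
    have hcard := quadraticChar_card_sqrts hchar y
    have hset : ({x ∈ Finset.univ | x ^ 2 = y} : Finset (ZMod q))
        = {x : ZMod q | x ^ 2 = y}.toFinset := by
      ext x; simp
    rw [hset]
    exact_mod_cast congrArg (fun n : ℤ => (n : ℂ)) hcard
  have h3 : ∑ y : ZMod q, ZMod.stdAddChar (a * y) = 0 := by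
    have := Fintype.sum_bijective (fun y : ZMod q => a * y) (Equiv.mulLeft₀ a ha).bijective
      (fun y : ZMod q => ZMod.stdAddChar (a * y)) (fun z => ZMod.stdAddChar z) (fun y => rfl)
    rw [this]
    exact AddChar.sum_eq_zero_iff_ne_zero.mpr (psi_ne_zero q)
  have h4 : ∑ y : ZMod q, (quadraticChar (ZMod q) y : ℂ) * ZMod.stdAddChar (a * y)
      = (quadraticChar (ZMod q) a : ℂ) *
        ∑ y : ZMod q, (quadraticChar (ZMod q) y : ℂ) * ZMod.stdAddChar y := by
    rw [Finset.mul_sum]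
    refine Fintype.sum_bijective (fun y : ZMod q => a * y) (Equiv.mulLeft₀ a ha).bijective
      _ _ (fun y => ?_)
    have hz : quadraticChar (ZMod q) a * quadraticChar (ZMod q) (a * y)
        = quadraticChar (ZMod q) y := by
      rw [_root_.map_mul, ← mul_assoc, ← pow_two, quadraticChar_sq_one ha, one_mul]
    have hz' : (quadraticChar (ZMod q) a : ℂ) * (quadraticChar (ZMod q) (a * y) : ℂ)
        = (quadraticChar (ZMod q) y : ℂ) := by exact_mod_cast congrArg (fun n : ℤ => (n : ℂ)) hz
    rw [← hz']
    ring
  rw [h1]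
  simp_rw [add_one_mul]
  rw [Finset.sum_add_distrib, h3, add_zero, h4]

lemma sum_psi_mul_sq' (q : ℕ) [Fact q.Prime] [NeZero q] (hq2 : q ≠ 2) (a : ZMod q) (ha : a ≠ 0) :
    ∑ x : ZMod q, ZMod.stdAddChar (a * x ^ 2)
      = (quadraticChar (ZMod q) a : ℂ) * ∑ x : ZMod q, ZMod.stdAddChar (x ^ 2) := by
  have hb := sum_psi_mul_sq q hq2 1 one_ne_zero
  simp only [one_mul, MulChar.map_one, Int.cast_one, one_mul] at hb
  rw [sum_psi_mul_sq q hq2 a ha, hb]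

lemma sum_psi_diag (q : ℕ) [Fact q.Prime] [NeZero q] (hq2 : q ≠ 2) {n : Type*} [Fintype n]
    [DecidableEq n] (v : n → ZMod q) (hv : ∀ i, v i ≠ 0) :
    ∑ y : n → ZMod q, ZMod.stdAddChar (∑ i, v i * y i ^ 2)
      = (∏ i, (quadraticChar (ZMod q) (v i) : ℂ)) *
        (∑ x : ZMod q, ZMod.stdAddChar (x ^ 2)) ^ Fintype.card n := by
  have hexp : ∀ y : n → ZMod q, ZMod.stdAddChar (∑ i, v i * y i ^ 2)
      = ∏ i, ZMod.stdAddChar (v i * y i ^ 2) := fun y => addChar_map_sum _ _ _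
  simp_rw [hexp]
  rw [← Fintype.piFinset_univ,
    Finset.sum_prod_piFinset Finset.univ (fun i x => ZMod.stdAddChar (v i * x ^ 2))]
  have : ∀ i : n, ∑ x : ZMod q, ZMod.stdAddChar (v i * x ^ 2)
      = (quadraticChar (ZMod q) (v i) : ℂ) * ∑ x : ZMod q, ZMod.stdAddChar (x ^ 2) :=
    fun i => sum_psi_mul_sq' q hq2 (v i) (hv i)
  simp_rw [this]
  rw [Finset.prod_mul_distrib, Finset.prod_const, Finset.card_univ]

lemma diag_toQuadraticMap' {n : Type*} [Fintype n] [DecidableEq n] {R : Type*} [CommRing R]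
    (v : n → R) (y : n → R) :
    (Matrix.diagonal v).toQuadraticMap' y = ∑ i, v i * y i ^ 2 := by
  rw [Matrix.toQuadraticMap', Matrix.toQuadraticForm', LinearMap.BilinMap.toQuadraticMap_apply,
    Matrix.toLinearMap₂'_apply]
  refine Finset.sum_congr rfl fun i _ => ?_
  rw [Finset.sum_eq_single i]
  · simp [Matrix.diagonal_apply_eq, smul_eq_mul]; ring
  · intro j _ hj
    simp [Matrix.diagonal_apply_ne' _ hj]
  · intro h; exact absurd (Finset.mem_univ i) h

lemma toLinearMap₂'_isSymm {n : Type*} [Fintype n] [DecidableEq n] {R : Type*} [CommRing R]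
    {K : Matrix n n R} (h : K.IsSymm) : (Matrix.toLinearMap₂' R K).IsSymm := by
  refine ⟨fun x y => ?_⟩
  simp only [RingHom.id_apply, Matrix.toLinearMap₂'_apply, smul_eq_mul]
  rw [Finset.sum_comm]
  refine Finset.sum_congr rfl fun i _ => Finset.sum_congr rfl fun j _ => ?_
  rw [← h.apply i j]
  ring

lemma sum_psi_quadform (q : ℕ) [Fact q.Prime] [NeZero q] (hq2 : q ≠ 2)
    {n : Type*} [Fintype n] [DecidableEq n] (K : Matrix n n (ZMod q))
    (hK : K.IsSymm) (hdet : K.det ≠ 0) :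
    ∑ y : n → ZMod q, ZMod.stdAddChar (K.toQuadraticMap' y)
      = (quadraticChar (ZMod q) K.det : ℂ) *
        (∑ x : ZMod q, ZMod.stdAddChar (x ^ 2)) ^ Fintype.card n := by
  have h2 : (2 : ZMod q) ≠ 0 := by
    have : ((2 : ℕ) : ZMod q) ≠ 0 := by
      rw [Ne, ZMod.natCast_eq_zero_iff]
      exact fun hdvd => hq2 ((Nat.prime_dvd_prime_iff_eq Fact.out Nat.prime_two).mp hdvd)
    simpa using this
  haveI : Invertible (2 : ZMod q) := invertibleOfNonzero h2
  set Q := K.toQuadraticMap' with hQdef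
  have hassoc : QuadraticMap.associated (R := ZMod q) Q = Matrix.toLinearMap₂' (ZMod q) K :=
    QuadraticMap.associated_left_inverse _ (toLinearMap₂'_isSymm hK).eq
  have hsep : (QuadraticMap.associated (R := ZMod q) Q).SeparatingLeft := by
    rw [hassoc]
    exact LinearMap.separatingLeft_toLinearMap₂'_iff_det_ne_zero.mpr hdet
  obtain ⟨w, ⟨e⟩⟩ := QuadraticForm.equivalent_weightedSumSquares_units_of_nondegenerate' Q hsep
  have hcard : Fintype.card n = Module.finrank (ZMod q) (n → ZMod q) :=
    (Module.finrank_fintype_fun_eq_card _).symm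
  set σ : n ≃ Fin (Module.finrank (ZMod q) (n → ZMod q)) := Fintype.equivFinOfCardEq hcard
  set v : n → ZMod q := fun j => (w (σ j) : ZMod q) with hvdef
  have hv : ∀ j, v j ≠ 0 := fun j => (w (σ j)).ne_zero
  set g : (n → ZMod q) ≃ₗ[ZMod q] (n → ZMod q) :=
    e.toLinearEquiv ≪≫ₗ LinearEquiv.funCongrLeft (ZMod q) (ZMod q) σ with hgdef
  have hQg : ∀ x, Q x = (Matrix.diagonal v).toQuadraticMap' (g x) := by
    intro x
    have h1 : Q x = QuadraticMap.weightedSumSquares (ZMod q) w (e x) := (e.map_app x).symm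
    rw [h1, diag_toQuadraticMap', QuadraticMap.weightedSumSquares_apply,
      ← Equiv.sum_comp σ (fun i => w i • (e x i * e x i))]
    refine Finset.sum_congr rfl fun j _ => ?_
    have hg : g x j = e x (σ j) := rfl
    rw [hg, Units.smul_def, smul_eq_mul, sq]
  have hsum : ∑ y : n → ZMod q, ZMod.stdAddChar (Q y)
      = ∑ y : n → ZMod q, ZMod.stdAddChar ((Matrix.diagonal v).toQuadraticMap' y) := by
    simp_rw [hQg]
    exact Fintype.sum_bijective g g.bijective _ _ (fun x => rfl)
  have hdiagsum : ∑ y : n → ZMod q, ZMod.stdAddChar ((Matrix.diagonal v).toQuadraticMap' y)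
      = (∏ i, (quadraticChar (ZMod q) (v i) : ℂ)) *
        (∑ x : ZMod q, ZMod.stdAddChar (x ^ 2)) ^ Fintype.card n := by
    simp_rw [diag_toQuadraticMap']
    exact sum_psi_diag q hq2 v hv
  -- determinant comparison
  have hcomp : Q = ((Matrix.diagonal v).toQuadraticMap').comp (g : (n → ZMod q) →ₗ[ZMod q] _) :=
    QuadraticMap.ext fun x => by rw [QuadraticMap.comp_apply]; exact hQg x
  have hKmat : Q.toMatrix' = K := by
    rw [QuadraticForm.toMatrix', hassoc, LinearMap.toMatrix'_toLinearMap₂']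
  have hDmat : ((Matrix.diagonal v).toQuadraticMap').toMatrix' = Matrix.diagonal v := by
    have h' : QuadraticMap.associated (R := ZMod q) ((Matrix.diagonal v).toQuadraticMap')
        = Matrix.toLinearMap₂' (ZMod q) (Matrix.diagonal v) :=
      QuadraticMap.associated_left_inverse _ (toLinearMap₂'_isSymm (Matrix.isSymm_diagonal v)).eq
    rw [QuadraticForm.toMatrix', h', LinearMap.toMatrix'_toLinearMap₂']
  set H := LinearMap.toMatrix' (g : (n → ZMod q) →ₗ[ZMod q] (n → ZMod q)) with hHdef
  have hdetK : K.det = H.det ^ 2 * ∏ j, v j := by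
    have := congrArg (fun Q : QuadraticMap (ZMod q) (n → ZMod q) (ZMod q) => (QuadraticForm.toMatrix' Q).det)
      hcomp
    simp only [hKmat] at this
    rw [this, QuadraticForm.toMatrix'_comp, hDmat, Matrix.det_mul, Matrix.det_mul,
      Matrix.det_transpose, Matrix.det_diagonal]
    ring
  have hdetH : H.det ≠ 0 := by
    intro h0
    rw [hdetK, h0] at hdet
    simp at hdet
  have hchar : quadraticChar (ZMod q) K.det = ∏ j, quadraticChar (ZMod q) (v j) := by
    rw [hdetK, _root_.map_mul, _root_.map_pow, quadraticChar_sq_one hdetH, one_mul, map_prod]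
  rw [hsum, hdiagsum, hchar]
  push_cast
  ring

lemma trace_eq_quadform {r d : ℕ} {R : Type*} [CommRing R] (A : Matrix (Fin r) (Fin r) R)
    (B : Matrix (Fin d) (Fin d) R) (hB : B.IsSymm) (y : Matrix (Fin r) (Fin d) R) :
    Matrix.trace (yᵀ * A * y * B)
      = (Matrix.kronecker A B).toQuadraticMap' (fun p : Fin r × Fin d => y p.1 p.2) := by
  rw [Matrix.toQuadraticMap', Matrix.toQuadraticForm', LinearMap.BilinMap.toQuadraticMap_apply,
    Matrix.toLinearMap₂'_apply]
  simp only [Fintype.sum_prod_type, kroneckerMap_apply, smul_eq_mul, kronecker]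
  simp only [Matrix.trace, Matrix.diag_apply, Matrix.mul_apply, Matrix.transpose_apply,
    Finset.sum_mul]
  conv_lhs => enter [2, j]; enter [2, l]; rw [Finset.sum_comm]
  conv_lhs => enter [2, j]; rw [Finset.sum_comm]
  rw [Finset.sum_comm]
  refine Finset.sum_congr rfl fun i _ => Finset.sum_congr rfl fun j _ => ?_
  rw [Finset.sum_comm]
  refine Finset.sum_congr rfl fun k _ => Finset.sum_congr rfl fun l _ => ?_
  rw [show B l j = B j l from hB.apply j l]
  ring

end GaussAux

theorem gauss_sum_odd_prime_eval (q : ℕ) [Fact q.Prime] (hq2 : q ≠ 2) (r d : ℕ)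
    (hr : 0 < r) (hd : 0 < d)
    (J : Matrix (Fin r) (Fin r) ℤ) (M : Matrix (Fin d) (Fin d) ℤ)
    (hJs : J.IsSymm) (hMs : M.IsSymm)
    (hJu : IsUnit (((2 • J).map (Int.cast : ℤ → ZMod q)).det))
    (hMu : IsUnit ((M.map (Int.cast : ℤ → ZMod q)).det)) :
    GS r d q (2 • J) M =
      ((legendreSym q J.det : ℤ) : ℂ) ^ d * ((legendreSym q M.det : ℤ) : ℂ) ^ r *
        (G1 q) ^ (r * d) := by
  haveI : NeZero q := ⟨(Fact.out : q.Prime).ne_zero⟩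
  classical
  set J₁ := J.map (Int.cast : ℤ → ZMod q) with hJ₁def
  set M₁ := M.map (Int.cast : ℤ → ZMod q) with hM₁def
  have h2ne : (2 : ZMod q) ≠ 0 := by
    have h22 : ((2 : ℕ) : ZMod q) ≠ 0 := by
      rw [Ne, ZMod.natCast_eq_zero_iff]
      exact fun hdvd => hq2 ((Nat.prime_dvd_prime_iff_eq Fact.out Nat.prime_two).mp hdvd)
    simpa using h22
  have hM₁det : M₁.det ≠ 0 := hMu.ne_zero
  have h2smul : ((2 • J).map (Int.cast : ℤ → ZMod q)) = (2 : ZMod q) • J₁ := by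
    ext i j
    have he : (2 • J) i j = 2 * J i j := by
      simp [Matrix.smul_apply, two_smul, two_mul]
    simp only [hJ₁def, Matrix.map_apply, Matrix.smul_apply, smul_eq_mul, he]
    push_cast
    ring
  have hJ₁det : J₁.det ≠ 0 := by
    have h0 := hJu.ne_zero
    rw [h2smul, Matrix.det_smul] at h0
    intro hz
    exact h0 (by rw [hz, mul_zero])
  have hM₁s : M₁.IsSymm := by
    rw [Matrix.IsSymm, ← Matrix.transpose_map, hMs]
  have hJ₁s : J₁.IsSymm := by
    rw [Matrix.IsSymm, ← Matrix.transpose_map, hJs]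
  set K := Matrix.kronecker J₁ M₁ with hKdef
  have hKs : K.IsSymm := by
    rw [Matrix.IsSymm]
    ext ⟨i, j⟩ ⟨k, l⟩
    simp only [Matrix.transpose_apply, hKdef, Matrix.kronecker, Matrix.kroneckerMap_apply]
    rw [← hJ₁s.apply k i, ← hM₁s.apply l j]
  have hKdet : K.det = J₁.det ^ d * M₁.det ^ r := by
    have hdk := Matrix.det_kronecker J₁ M₁
    simp only [Fintype.card_fin] at hdk
    rw [hKdef]
    exact hdk
  have hKdetne : K.det ≠ 0 := by
    rw [hKdet]
    exact mul_ne_zero (pow_ne_zero _ hJ₁det) (pow_ne_zero _ hM₁det)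
  -- Step 1: rewrite GS as a character sum over `(Fin r × Fin d) → ZMod q`.
  have step1 : GS r d q (2 • J) M
      = ∑ v : (Fin r × Fin d) → ZMod q, ZMod.stdAddChar (K.toQuadraticMap' v) := by
    rw [GS]
    have hsummand : ∀ x : Matrix (Fin r) (Fin d) (Fin q),
        Complex.exp ((Real.pi : ℂ) * Complex.I *
          (((Matrix.trace ((x.map fun a => ((a : ℕ) : ℤ))ᵀ * (2 • J) *
              (x.map fun a => ((a : ℕ) : ℤ)) * M) : ℤ) : ℂ) / (q : ℂ)))
        = ZMod.stdAddChar
            (((Matrix.trace ((x.map fun a => ((a : ℕ) : ℤ))ᵀ * J *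
              (x.map fun a => ((a : ℕ) : ℤ)) * M) : ℤ) : ZMod q)) := by
      intro x
      set t : ℤ := Matrix.trace ((x.map fun a => ((a : ℕ) : ℤ))ᵀ * J *
        (x.map fun a => ((a : ℕ) : ℤ)) * M) with ht
      have htr : Matrix.trace ((x.map fun a => ((a : ℕ) : ℤ))ᵀ * (2 • J) *
          (x.map fun a => ((a : ℕ) : ℤ)) * M) = 2 * t := by
        have hsm : (x.map fun a => ((a : ℕ) : ℤ))ᵀ * (2 • J) *
            (x.map fun a => ((a : ℕ) : ℤ)) * M
            = 2 • ((x.map fun a => ((a : ℕ) : ℤ))ᵀ * J * (x.map fun a => ((a : ℕ) : ℤ)) * M) := by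
          rw [Matrix.mul_smul, Matrix.smul_mul, Matrix.smul_mul]
        rw [hsm, Matrix.trace_smul, ht, nsmul_eq_mul]
        norm_num
      rw [htr, ZMod.stdAddChar_coe]
      congr 1
      push_cast
      ring
    rw [Finset.sum_congr rfl fun x _ => hsummand x]
    have hmap : ∀ x : Matrix (Fin r) (Fin d) (Fin q),
        ((Matrix.trace ((x.map fun a => ((a : ℕ) : ℤ))ᵀ * J *
          (x.map fun a => ((a : ℕ) : ℤ)) * M) : ℤ) : ZMod q)
        = Matrix.trace ((x.map fun a => ((a : ℕ) : ZMod q))ᵀ * J₁ *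
          (x.map fun a => ((a : ℕ) : ZMod q)) * M₁) := by
      intro x
      simp only [Matrix.trace, Matrix.diag_apply, Matrix.mul_apply, Matrix.transpose_apply,
        Matrix.map_apply, hJ₁def, hM₁def]
      push_cast
      rfl
    rw [Finset.sum_congr rfl fun x _ => by rw [hmap x]]
    let E : Matrix (Fin r) (Fin d) (Fin q) ≃ ((Fin r × Fin d) → ZMod q) :=
      ((Matrix.of).symm.trans (Equiv.curry (Fin r) (Fin d) (Fin q)).symm).trans
        (Equiv.piCongrRight fun _ => GaussAux.finZModEquiv q)
    refine Fintype.sum_equiv E _ _ (fun x => ?_)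
    congr 1
    have := GaussAux.trace_eq_quadform J₁ M₁ hM₁s (x.map fun a => ((a : ℕ) : ZMod q))
    rw [this]
    rfl
  rw [step1, GaussAux.sum_psi_quadform q hq2 K hKs hKdetne]
  -- identify G1 with the standard character sum
  have hG1 : G1 q = ∑ x : ZMod q, ZMod.stdAddChar (x ^ 2) := by
    rw [G1]
    refine Fintype.sum_equiv (GaussAux.finZModEquiv q) _ _ (fun a => ?_)
    have h1 : ((((a : ℕ) : ZMod q)) : ZMod q) ^ 2 = ((((a : ℕ) ^ 2 : ℕ) : ℤ) : ZMod q) := by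
      push_cast
      ring
    show _ = ZMod.stdAddChar ((((a : ℕ) : ZMod q)) ^ 2)
    rw [h1, ZMod.stdAddChar_coe]
    congr 1
    push_cast
    ring
  -- identify Legendre symbols
  have hlegJ : (legendreSym q J.det : ℂ) = (quadraticChar (ZMod q) J₁.det : ℂ) := by
    rw [legendreSym]
    congr 2
    rw [show ((J.det : ℤ) : ZMod q) = (Int.castRingHom (ZMod q)) J.det from rfl,
      RingHom.map_det]
    rfl
  have hlegM : (legendreSym q M.det : ℂ) = (quadraticChar (ZMod q) M₁.det : ℂ) := by
    rw [legendreSym]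
    congr 2
    rw [show ((M.det : ℤ) : ZMod q) = (Int.castRingHom (ZMod q)) M.det from rfl,
      RingHom.map_det]
    rfl
  have hcard : Fintype.card (Fin r × Fin d) = r * d := by simp
  have hchar : (quadraticChar (ZMod q) K.det : ℂ)
      = (quadraticChar (ZMod q) J₁.det : ℂ) ^ d * (quadraticChar (ZMod q) M₁.det : ℂ) ^ r := by
    rw [hKdet, _root_.map_mul, _root_.map_pow, _root_.map_pow]
    push_cast
    ring
  rw [hcard, hchar, hG1, hlegJ, hlegM]
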